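/- Let u, v ∈ {0,1}^D be binary vectors, and define A_k = a_{u_k}^{p(k)} and B_k = b_{v_k}^{p(k)} where p(k) is 'o' if k is odd and 'e' if k is even, using the fixed planar points of the construction. If u·v = 0 (u ⊥ v) then max_k d(A_k, B_k) ≤ 1, and if u·v ≠ 0 then max_k d(A_k, B_k) ≥ 1.61. -/

import Mathlib

noncomputable def pt (x y : ℝ) : EuclideanSpace ℝ (Fin 2) := WithLp.toLp 2 ![x, y]

noncomputable def b0o := pt 0 1.61
noncomputable def b0e := pt 0 (-1.61)
noncomputable def b1o := pt (-1.305) 0.66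
noncomputable def b1e := pt (-1.305) (-0.66)
noncomputable def a0o := pt (-0.305) 0.66
noncomputable def a0e := pt (-0.305) (-0.66)
noncomputable def a1o := pt 0.305 0.66
noncomputable def a1e := pt 0.305 (-0.66)
noncomputable def sPt := pt 0.555 0
noncomputable def w1 := pt (-0.445) 0
noncomputable def w2 := pt 0.445 0
noncomputable def x1 := pt (-0.88) 0.90
noncomputable def x2 := pt 1.445 0

/-- The `a`-point for bit `x` at a position of parity `odd`. -/
noncomputable def aPt (x : Bool) (odd : Bool) : EuclideanSpace ℝ (Fin 2) :=
  if x then (if odd then a1o else a1e) else (if odd then a0o else a0e)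

/-- The `b`-point for bit `x` at a position of parity `odd`. -/
noncomputable def bPt (x : Bool) (odd : Bool) : EuclideanSpace ℝ (Fin 2) :=
  if x then (if odd then b1o else b1e) else (if odd then b0o else b0e)

/-- In the parallel coupling of the vector gadgets for `u, v ∈ {0,1}^D`
(position `k+1` for `k : Fin D`, odd positions having `k.val` even):
if `u ⊥ v` then every paired distance is at most `1` (so the maximum is ≤ 1);
otherwise some paired distance is at least `1.61` (so the maximum is ≥ 1.61). -/
lemma dist_pt (x y x' y' : ℝ) :
    dist (pt x y) (pt x' y') = Real.sqrt ((x - x')^2 + (y - y')^2) := by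
  rw [EuclideanSpace.dist_eq]
  congr 1
  rw [Fin.sum_univ_two]
  simp [pt, Real.dist_eq, sq_abs]

lemma dist_ab_le (x y : Bool) (h : ¬(x = true ∧ y = true)) (p : Bool) :
    dist (aPt x p) (bPt y p) ≤ 1 := by
  rcases x <;> rcases y <;> rcases p <;>
    simp_all [aPt, bPt, a0o, a0e, a1o, a1e, b0o, b0e, b1o, b1e, dist_pt] <;>
    norm_num

lemma dist_ab_ge (p : Bool) : (1.61:ℝ) ≤ dist (aPt true p) (bPt true p) := by
  have h1 : (1.61:ℝ) = Real.sqrt (1.61^2) := by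
    rw [Real.sqrt_sq]; norm_num
  rcases p <;>
    simp [aPt, bPt, a1o, a1e, b1o, b1e, dist_pt] <;>
    rw [h1] <;> exact Real.sqrt_le_sqrt (by norm_num)

theorem parallel_coupling_dists (D : ℕ) (u v : Fin D → Bool) :
    ((∀ k : Fin D, ¬(u k = true ∧ v k = true)) →
      ∀ k : Fin D, dist (aPt (u k) (decide (k.val % 2 = 0))) (bPt (v k) (decide (k.val % 2 = 0))) ≤ 1) ∧
    ((∃ k : Fin D, u k = true ∧ v k = true) →
      ∃ k : Fin D, 1.61 ≤ dist (aPt (u k) (decide (k.val % 2 = 0))) (bPt (v k) (decide (k.val % 2 = 0)))) := by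
  constructor
  · intro h k
    exact dist_ab_le _ _ (h k) _
  · rintro ⟨k, hu, hv⟩
    exact ⟨k, by rw [hu, hv]; exact dist_ab_ge _⟩
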